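/- (Existence of models realizing step functions) Let $M = (0,1)$, $\Omega$ a measurable space, $\mu$ a finite measure on $\Omega$, $x_0 \in M$, and $\tau = \sum_{i=1}^n \tau_i \chi_{D_i}$ a step function subject to a measurable partition $\Omega = D_1 \dot\cup \cdots \dot\cup D_n$ with associated statistic $\kappa: \Omega \to \Omega_n$. Then the family $p(x) := \exp\big(\sum_i (x - x_0)\tau_i \chi_{D_i}\big)\,\mu$ defines a $k$-integrable parametrized measure model $(M,\Omega,\mu,p)$ such that: (1) $\kappa$ is sufficient for the parameter; (2) $p(x_0) = \mu$; (3) $\partial_x \ln \bar p(x,\omega) = \tau(\omega)$ for all $x$. -/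

import Mathlib

open MeasureTheory
open scoped ENNReal

/-- Existence of models realizing step functions: given a finite measure `μ` on `Ω`,
`x₀ ∈ M = (0,1)`, a measurable partition `Ω = D₁ ∪ … ∪ Dₙ` with associated statistic
`κ : Ω → Ωₙ`, and a step function `τ = Σ τᵢ χ_{Dᵢ}` subject to `κ`, the family
`p(x) = exp((x - x₀) τ) · μ` is a `k`-integrable parametrized measure model such that
(1) `κ` is sufficient for the parameter (Fisher–Neyman factorization with `t ≡ 1`),
(2) `p(x₀) = μ`, and (3) `∂_x ln p̄(x,ω) = τ(ω)`. -/
theorem stmt_15 {Ω : Type*} [MeasurableSpace Ω] (μ : Measure Ω) [IsFiniteMeasure μ]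
    (n : ℕ) (D : Fin n → Set Ω) (hD : ∀ i, MeasurableSet (D i))
    (hdisj : Pairwise fun i j => Disjoint (D i) (D j))
    (hcover : (⋃ i, D i) = Set.univ)
    (κ : Ω → Fin n) (hκ : ∀ i, ∀ ω ∈ D i, κ ω = i)
    (τi : Fin n → ℝ)
    (τ : Ω → ℝ) (hτ : τ = fun ω => ∑ i, Set.indicator (D i) (fun _ => τi i) ω)
    (x₀ : ℝ) (hx₀ : x₀ ∈ Set.Ioo (0:ℝ) 1)
    (p : ℝ → Measure Ω)
    (hp : ∀ x, p x = μ.withDensity fun ω => ENNReal.ofReal (Real.exp ((x - x₀) * τ ω))) :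
    -- (1) `κ` is sufficient for the parameter
    (∃ (s : ℝ → Fin n → ℝ) (t : Ω → ℝ), ∀ x ω,
        Real.exp ((x - x₀) * τ ω) = s x (κ ω) * t ω) ∧
    -- (2) the model passes through `μ` at `x₀`
    p x₀ = μ ∧
    -- (3) the score is the step function `τ`
    (∀ x ω, deriv (fun y => Real.log (Real.exp ((y - x₀) * τ ω))) x = τ ω) ∧
    -- `k`-integrability for every `k`, with norm continuous in `x`
    (∀ (k : ℝ≥0∞) (x : ℝ), x ∈ Set.Ioo (0:ℝ) 1 → MemLp τ k (p x)) ∧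
    (∀ k : ℝ≥0∞, Continuous fun x : ℝ => (eLpNorm τ k (p x)).toReal) := by
  -- τ equals τi i on D i
  have hτD : ∀ i, ∀ ω ∈ D i, τ ω = τi i := by
    intro i ω hω
    have hτω : τ ω = ∑ j, Set.indicator (D j) (fun _ => τi j) ω := by rw [hτ]
    rw [hτω, Finset.sum_eq_single i]
    · simp [Set.indicator_of_mem hω]
    · intro j _ hji
      exact Set.indicator_of_notMem
        (fun hωj => Set.disjoint_left.mp (hdisj hji) hωj hω) _
    · intro h; exact absurd (Finset.mem_univ i) h
  have hτκ : ∀ ω, τ ω = τi (κ ω) := by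
    intro ω
    obtain ⟨i, hi⟩ : ∃ i, ω ∈ D i := by
      have : ω ∈ ⋃ i, D i := hcover ▸ Set.mem_univ ω
      simpa [Set.mem_iUnion] using this
    rw [hκ i ω hi, hτD i ω hi]
  have hτmeas : Measurable τ := by
    rw [hτ]
    exact Finset.measurable_sum _ fun i _ => measurable_const.indicator (hD i)
  have hbound : ∀ ω, |τ ω| ≤ ∑ i, |τi i| := by
    intro ω
    rw [hτκ ω]
    exact Finset.single_le_sum (f := fun i => |τi i|) (fun i _ => abs_nonneg _)
      (Finset.mem_univ _)
  -- integration of functions of τ over the partition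
  have hint : ∀ F : ℝ → ℝ≥0∞, ∫⁻ ω, F (τ ω) ∂μ = ∑ i, F (τi i) * μ (D i) := by
    intro F
    have h1 : ∫⁻ ω, F (τ ω) ∂μ = ∫⁻ ω in ⋃ i, D i, F (τ ω) ∂μ := by
      rw [hcover, Measure.restrict_univ]
    rw [h1, lintegral_iUnion hD hdisj, tsum_fintype]
    refine Finset.sum_congr rfl fun i _ => ?_
    rw [setLIntegral_congr_fun_ae (hD i)
      (Filter.Eventually.of_forall fun ω hω => by rw [hτD i ω hω]), setLIntegral_const]
  -- measurability of the density
  have hdens : ∀ x : ℝ, Measurable fun ω => ENNReal.ofReal (Real.exp ((x - x₀) * τ ω)) :=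
    fun x => ((hτmeas.const_mul (x - x₀)).exp).ennreal_ofReal
  refine ⟨?_, ?_, ?_, ?_, ?_⟩
  · -- (1) sufficiency
    exact ⟨fun x i => Real.exp ((x - x₀) * τi i), fun _ => 1,
      fun x ω => by rw [hτκ ω, mul_one]⟩
  · -- (2)
    rw [hp x₀]
    simp [sub_self, Real.exp_zero]
  · -- (3)
    intro x ω
    simp only [Real.log_exp]
    have h := ((hasDerivAt_id x).sub_const x₀).mul_const (τ ω)
    simpa using h.deriv
  · -- (4) k-integrability
    intro k x _
    rw [hp x]
    haveI : IsFiniteMeasure (μ.withDensity fun ω =>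
        ENNReal.ofReal (Real.exp ((x - x₀) * τ ω))) := by
      constructor
      rw [withDensity_apply _ MeasurableSet.univ, Measure.restrict_univ]
      calc ∫⁻ ω, ENNReal.ofReal (Real.exp ((x - x₀) * τ ω)) ∂μ
          ≤ ∫⁻ _, ENNReal.ofReal (Real.exp (|x - x₀| * ∑ i, |τi i|)) ∂μ := by
            refine lintegral_mono fun ω => ENNReal.ofReal_le_ofReal
              (Real.exp_le_exp.mpr ?_)
            calc (x - x₀) * τ ω ≤ |(x - x₀) * τ ω| := le_abs_self _
              _ = |x - x₀| * |τ ω| := abs_mul _ _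
              _ ≤ |x - x₀| * ∑ i, |τi i| :=
                  mul_le_mul_of_nonneg_left (hbound ω) (abs_nonneg _)
        _ = ENNReal.ofReal (Real.exp (|x - x₀| * ∑ i, |τi i|)) * μ Set.univ :=
            lintegral_const _
        _ < ⊤ := ENNReal.mul_lt_top ENNReal.ofReal_lt_top (measure_lt_top μ _)
    have htop : MemLp τ ⊤ (μ.withDensity fun ω =>
        ENNReal.ofReal (Real.exp ((x - x₀) * τ ω))) :=
      memLp_top_of_bound hτmeas.aestronglyMeasurable (∑ i, |τi i|)
        (Filter.Eventually.of_forall fun ω => by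
          rw [Real.norm_eq_abs]; exact hbound ω)
    exact htop.mono_exponent le_top
  · -- (5) continuity of the norm
    intro k
    rcases eq_or_ne k 0 with rfl | hk0
    · simpa [eLpNorm_exponent_zero] using continuous_const (y := (0:ℝ))
    rcases eq_or_ne k ∞ with rfl | hktop
    · -- p = ∞ : the norm is constant in x since all p x are equivalent to μ
      have hae : ∀ x : ℝ, ae (p x) = ae μ := by
        intro x
        rw [hp x]
        refine le_antisymm ((withDensity_absolutelyContinuous μ _).ae_le) ?_
        exact (withDensity_absolutelyContinuous' (hdens x).aemeasurable
          (Filter.Eventually.of_forall fun ω =>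
            (ENNReal.ofReal_pos.mpr (Real.exp_pos _)).ne')).ae_le
      have hconst : ∀ x : ℝ, eLpNorm τ ⊤ (p x) = eLpNorm τ ⊤ μ := by
        intro x
        simp only [eLpNorm_exponent_top, eLpNormEssSup, essSup]
        rw [hae x]
      simp only [hconst]
      exact continuous_const
    · -- 0 < p < ∞
      set r := k.toReal with hr
      have hr0 : 0 < r := ENNReal.toReal_pos hk0 hktop
      have key : ∀ x : ℝ, (eLpNorm τ k (p x)).toReal =
          (∑ i, Real.exp ((x - x₀) * τi i) * (|τi i| ^ r * (μ (D i)).toReal)) ^ (1/r) := by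
        intro x
        rw [eLpNorm_eq_lintegral_rpow_enorm_toReal hk0 hktop, hp x, ← hr,
          lintegral_withDensity_eq_lintegral_mul μ (hdens x)
            (hτmeas.enorm.pow_const r)]
        have : (fun ω => ((fun ω => ENNReal.ofReal (Real.exp ((x - x₀) * τ ω))) *
              fun ω => ‖τ ω‖ₑ ^ r) ω) =
            fun ω => (fun y : ℝ => ENNReal.ofReal (Real.exp ((x - x₀) * y)) *
              ‖y‖ₑ ^ r) (τ ω) := rfl
        rw [this, hint (fun y : ℝ => ENNReal.ofReal (Real.exp ((x - x₀) * y)) * ‖y‖ₑ ^ r)]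
        rw [← ENNReal.toReal_rpow]
        congr 1
        rw [ENNReal.toReal_sum (fun i _ => by
          exact ENNReal.mul_ne_top
            (ENNReal.mul_ne_top ENNReal.ofReal_ne_top
              (ENNReal.rpow_ne_top_of_nonneg hr0.le enorm_ne_top))
            (measure_ne_top μ _))]
        refine Finset.sum_congr rfl fun i _ => ?_
        rw [ENNReal.toReal_mul, ENNReal.toReal_mul,
          ENNReal.toReal_ofReal (Real.exp_pos _).le, mul_assoc]
        congr 2
        rw [← ENNReal.toReal_rpow, toReal_enorm, Real.norm_eq_abs]
      simp only [key]
      refine Continuous.rpow_const ?_ fun x => Or.inr (by positivity)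
      refine continuous_finset_sum _ fun i _ => ?_
      exact (((continuous_id.sub continuous_const).mul continuous_const).rexp).mul
        continuous_const
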